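/- Under the stated setup and algorithmic hypotheses, A^{k+1} − A^k → 0 and Z^{k+1} − Z^k → 0 as k → ∞ (convergence in ℝ^{n×n} with the Frobenius norm). -/

import Mathlib

open Matrix BigOperators Filter Topology

/-- Frobenius norm of a real matrix. -/
noncomputable def frob {m n : ℕ} (W : Matrix (Fin m) (Fin n) ℝ) : ℝ :=
  Real.sqrt (∑ i, ∑ j, (W i j) ^ 2)

/-- Laplacian `L_S = D_S - (|S| + |S|ᵀ)/2` of a square real matrix `S`. -/
noncomputable def lap {n : ℕ} (S : Matrix (Fin n) (Fin n) ℝ) : Matrix (Fin n) (Fin n) ℝ :=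
  Matrix.diagonal (fun i => ∑ j, (|S i j| + |S j i|) / 2)
    - (1 / 2 : ℝ) • (S.map (fun x => |x|) + (S.map (fun x => |x|))ᵀ)

/-- The objective `f(A, Z, H)` of the penalized DGSL model. -/
noncomputable def fObj {n k d : ℕ} (X : Matrix (Fin d) (Fin n) ℝ)
    (W M C : Matrix (Fin n) (Fin n) ℝ) (lam lamZ lamM a1 a2 : ℝ)
    (A Z : Matrix (Fin n) (Fin n) ℝ) (H : Matrix (Fin k) (Fin n) ℝ) : ℝ :=
  (1 / 2) * frob (X - X * A) ^ 2 + (lam / 2) * frob (A - Z) ^ 2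
    + lamZ * (∑ i, ∑ j, |Z i j|)
    + a1 * trace (H * lap Z * Hᵀ) / trace (H * lap C * Hᵀ)
    + a2 * trace (H * (lap W + lamM • lap M) * Hᵀ) / trace (H * lap C * Hᵀ)

lemma sqsum_nonneg {m n : ℕ} (W : Matrix (Fin m) (Fin n) ℝ) :
    0 ≤ ∑ i, ∑ j, (W i j) ^ 2 :=
  Finset.sum_nonneg fun _ _ => Finset.sum_nonneg fun _ _ => sq_nonneg _

lemma frob_sq {m n : ℕ} (W : Matrix (Fin m) (Fin n) ℝ) :
    frob W ^ 2 = ∑ i, ∑ j, (W i j) ^ 2 :=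
  Real.sq_sqrt (sqsum_nonneg W)

lemma frob_nonneg {m n : ℕ} (W : Matrix (Fin m) (Fin n) ℝ) : 0 ≤ frob W :=
  Real.sqrt_nonneg _

lemma frob_sub_comm {m n : ℕ} (U V : Matrix (Fin m) (Fin n) ℝ) :
    frob (U - V) = frob (V - U) := by
  unfold frob
  congr 1
  exact Finset.sum_congr rfl fun i _ => Finset.sum_congr rfl fun j _ => by
    simp only [Matrix.sub_apply]; ring

lemma para {m n : ℕ} (U V : Matrix (Fin m) (Fin n) ℝ) :
    frob ((1/2 : ℝ) • (U + V)) ^ 2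
      = frob U ^ 2 / 2 + frob V ^ 2 / 2 - frob (U - V) ^ 2 / 4 := by
  simp only [frob_sq, Finset.sum_div, ← Finset.sum_sub_distrib, ← Finset.sum_add_distrib]
  refine Finset.sum_congr rfl fun i _ => Finset.sum_congr rfl fun j _ => ?_
  simp only [Matrix.smul_apply, Matrix.add_apply, Matrix.sub_apply, smul_eq_mul]
  ring

lemma traceConjExpand {n k : ℕ} (H : Matrix (Fin k) (Fin n) ℝ) (L : Matrix (Fin n) (Fin n) ℝ) :
    trace (H * L * Hᵀ) = ∑ i, ∑ j, L i j * ∑ p, H p i * H p j := by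
  conv_rhs => rw [Finset.sum_comm]
  simp only [Matrix.trace, Matrix.diag, Matrix.mul_apply, Matrix.transpose_apply,
    Finset.sum_mul, Finset.mul_sum]
  rw [Finset.sum_comm]
  refine Finset.sum_congr rfl fun j _ => ?_
  rw [Finset.sum_comm]
  refine Finset.sum_congr rfl fun i _ => Finset.sum_congr rfl fun p _ => by ring

lemma trace_lap {n k : ℕ} (H : Matrix (Fin k) (Fin n) ℝ) (Z : Matrix (Fin n) (Fin n) ℝ) :
    trace (H * lap Z * Hᵀ)
      = ∑ i, ∑ j, ((|Z i j| + |Z j i|) / 2) * ((∑ p, (H p i - H p j) ^ 2) / 2) := by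
  set B : Fin n → Fin n → ℝ := fun i j => (|Z i j| + |Z j i|) / 2 with hB
  set G : Fin n → Fin n → ℝ := fun i j => ∑ p, H p i * H p j with hG
  have hBsym : ∀ i j, B j i = B i j := by intro i j; simp [hB, add_comm]
  have hlap : ∀ i j, (lap Z) i j = (if i = j then ∑ l, B i l else 0) - B i j := by
    intro i j
    simp [lap, Matrix.diagonal_apply, Matrix.sub_apply, Matrix.smul_apply,
      Matrix.add_apply, Matrix.map_apply, Matrix.transpose_apply, hB, mul_add]
    ring
  have hGexp : ∀ i j, ∑ p, (H p i - H p j) ^ 2 = G i i + G j j - 2 * G i j := by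
    intro i j
    simp only [hG, ← Finset.sum_sub_distrib, ← Finset.sum_add_distrib, Finset.mul_sum]
    exact Finset.sum_congr rfl fun p _ => by ring
  have hsym : ∑ i, ∑ j, B i j * G j j = ∑ i, ∑ j, B i j * G i i := by
    rw [Finset.sum_comm]
    exact Finset.sum_congr rfl fun i _ => Finset.sum_congr rfl fun j _ => by rw [hBsym]
  rw [traceConjExpand]
  have hL : ∑ i, ∑ j, (lap Z) i j * ∑ p, H p i * H p j
      = ∑ i, ∑ j, (B i j * G i i - B i j * G i j) := by
    refine Eq.trans (Finset.sum_congr rfl fun i _ => ?_) rfl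
    rw [show ∑ j, (lap Z) i j * ∑ p, H p i * H p j
        = ∑ j, ((if i = j then ∑ l, B i l else 0) * G i j - B i j * G i j) from
      Finset.sum_congr rfl fun j _ => by rw [hlap]; ring]
    rw [Finset.sum_sub_distrib, Finset.sum_sub_distrib]
    congr 1
    simp only [ite_mul, zero_mul]
    rw [Finset.sum_ite_eq, if_pos (Finset.mem_univ i), Finset.sum_mul]
  rw [hL]
  have hR : ∑ i, ∑ j, B i j * ((∑ p, (H p i - H p j) ^ 2) / 2)
      = ∑ i, ∑ j, (B i j * G i i / 2 + B i j * G j j / 2 - B i j * G i j) := by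
    exact Finset.sum_congr rfl fun i _ => Finset.sum_congr rfl fun j _ => by
      rw [hGexp]; ring
  rw [show (∑ i, ∑ j, ((|Z i j| + |Z j i|) / 2) * ((∑ p, (H p i - H p j) ^ 2) / 2))
      = ∑ i, ∑ j, B i j * ((∑ p, (H p i - H p j) ^ 2) / 2) from rfl, hR]
  simp only [Finset.sum_sub_distrib, Finset.sum_add_distrib]
  have e2 : ∀ (F : Fin n → Fin n → ℝ), ∑ i, ∑ j, F i j / 2 = (∑ i, ∑ j, F i j) / 2 := by
    intro F; simp [Finset.sum_div]
  rw [e2 (fun i j => B i j * G i i), e2 (fun i j => B i j * G j j), hsym]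
  ring

lemma trace_lap_nonneg {n k : ℕ} (H : Matrix (Fin k) (Fin n) ℝ)
    (Z : Matrix (Fin n) (Fin n) ℝ) : 0 ≤ trace (H * lap Z * Hᵀ) := by
  rw [trace_lap]
  refine Finset.sum_nonneg fun i _ => Finset.sum_nonneg fun j _ => ?_
  have h1 : 0 ≤ (|Z i j| + |Z j i|) / 2 := by positivity
  have h2 : 0 ≤ (∑ p, (H p i - H p j) ^ 2) / 2 := by positivity
  exact mul_nonneg h1 h2

lemma trace_lap_mid {n k : ℕ} (H : Matrix (Fin k) (Fin n) ℝ)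
    (Z Z' : Matrix (Fin n) (Fin n) ℝ) :
    trace (H * lap ((1/2 : ℝ) • (Z + Z')) * Hᵀ)
      ≤ (trace (H * lap Z * Hᵀ) + trace (H * lap Z' * Hᵀ)) / 2 := by
  rw [trace_lap, trace_lap, trace_lap, ← Finset.sum_add_distrib, Finset.sum_div]
  refine Finset.sum_le_sum fun i _ => ?_
  rw [← Finset.sum_add_distrib, Finset.sum_div]
  refine Finset.sum_le_sum fun j _ => ?_
  have hq : 0 ≤ (∑ p, (H p i - H p j) ^ 2) / 2 := by positivity
  have habs1 : |((1/2 : ℝ) • (Z + Z')) i j| ≤ (|Z i j| + |Z' i j|) / 2 := by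
    simp only [Matrix.smul_apply, Matrix.add_apply, smul_eq_mul]
    calc |1/2 * (Z i j + Z' i j)| = |Z i j + Z' i j| / 2 := by
          rw [abs_mul]; simp [abs_of_nonneg]; ring
      _ ≤ (|Z i j| + |Z' i j|) / 2 := by
          have := abs_add_le (Z i j) (Z' i j); linarith
  have habs2 : |((1/2 : ℝ) • (Z + Z')) j i| ≤ (|Z j i| + |Z' j i|) / 2 := by
    simp only [Matrix.smul_apply, Matrix.add_apply, smul_eq_mul]
    calc |1/2 * (Z j i + Z' j i)| = |Z j i + Z' j i| / 2 := by
          rw [abs_mul]; simp [abs_of_nonneg]; ring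
      _ ≤ (|Z j i| + |Z' j i|) / 2 := by
          have := abs_add_le (Z j i) (Z' j i); linarith
  have hb : (|((1/2 : ℝ) • (Z + Z')) i j| + |((1/2 : ℝ) • (Z + Z')) j i|) / 2
      ≤ ((|Z i j| + |Z j i|) / 2 + (|Z' i j| + |Z' j i|) / 2) / 2 := by linarith
  calc (|((1/2 : ℝ) • (Z + Z')) i j| + |((1/2 : ℝ) • (Z + Z')) j i|) / 2
        * ((∑ p, (H p i - H p j) ^ 2) / 2)
      ≤ ((|Z i j| + |Z j i|) / 2 + (|Z' i j| + |Z' j i|) / 2) / 2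
        * ((∑ p, (H p i - H p j) ^ 2) / 2) := mul_le_mul_of_nonneg_right hb hq
    _ = ((|Z i j| + |Z j i|) / 2 * ((∑ p, (H p i - H p j) ^ 2) / 2)
        + (|Z' i j| + |Z' j i|) / 2 * ((∑ p, (H p i - H p j) ^ 2) / 2)) / 2 := by ring

lemma l1_mid {n : ℕ} (Z Z' : Matrix (Fin n) (Fin n) ℝ) :
    (∑ i, ∑ j, |((1/2 : ℝ) • (Z + Z')) i j|)
      ≤ ((∑ i, ∑ j, |Z i j|) + ∑ i, ∑ j, |Z' i j|) / 2 := by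
  rw [← Finset.sum_add_distrib, Finset.sum_div]
  refine Finset.sum_le_sum fun i _ => ?_
  rw [← Finset.sum_add_distrib, Finset.sum_div]
  refine Finset.sum_le_sum fun j _ => ?_
  simp only [Matrix.smul_apply, Matrix.add_apply, smul_eq_mul]
  calc |1/2 * (Z i j + Z' i j)| = |Z i j + Z' i j| / 2 := by
        rw [abs_mul]; simp [abs_of_nonneg]; ring
    _ ≤ (|Z i j| + |Z' i j|) / 2 := by
        have := abs_add_le (Z i j) (Z' i j); linarith

lemma trace_lap_pair {n k : ℕ} (H : Matrix (Fin k) (Fin n) ℝ)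
    (W M : Matrix (Fin n) (Fin n) ℝ) (c : ℝ) (hc : 0 ≤ c) :
    0 ≤ trace (H * (lap W + c • lap M) * Hᵀ) := by
  have e : H * (lap W + c • lap M) * Hᵀ
      = H * lap W * Hᵀ + c • (H * lap M * Hᵀ) := by
    rw [Matrix.mul_add, Matrix.add_mul, Matrix.mul_smul, Matrix.smul_mul]
  rw [e, trace_add, trace_smul]
  have := trace_lap_nonneg H W
  have := trace_lap_nonneg H M
  simp only [smul_eq_mul]
  nlinarith

lemma fObj_nonneg {n k d : ℕ} (X : Matrix (Fin d) (Fin n) ℝ)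
    (W M C : Matrix (Fin n) (Fin n) ℝ) (lam lamZ lamM a1 a2 : ℝ)
    (hlam : 0 ≤ lam) (hlamZ : 0 ≤ lamZ) (hlamM : 0 ≤ lamM) (ha1 : 0 ≤ a1) (ha2 : 0 ≤ a2)
    (A Z : Matrix (Fin n) (Fin n) ℝ) (H : Matrix (Fin k) (Fin n) ℝ)
    (hc : 0 < trace (H * lap C * Hᵀ)) :
    0 ≤ fObj X W M C lam lamZ lamM a1 a2 A Z H := by
  unfold fObj
  have t1 : (0:ℝ) ≤ (1/2) * frob (X - X * A) ^ 2 := by positivity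
  have t2 : (0:ℝ) ≤ (lam/2) * frob (A - Z) ^ 2 := by positivity
  have t3 : (0:ℝ) ≤ lamZ * (∑ i, ∑ j, |Z i j|) := by
    refine mul_nonneg hlamZ (Finset.sum_nonneg fun i _ =>
      Finset.sum_nonneg fun j _ => abs_nonneg _)
  have t4 : (0:ℝ) ≤ a1 * trace (H * lap Z * Hᵀ) / trace (H * lap C * Hᵀ) :=
    div_nonneg (mul_nonneg ha1 (trace_lap_nonneg H Z)) hc.le
  have t5 : (0:ℝ) ≤ a2 * trace (H * (lap W + lamM • lap M) * Hᵀ) / trace (H * lap C * Hᵀ) :=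
    div_nonneg (mul_nonneg ha2 (trace_lap_pair H W M lamM hlamM)) hc.le
  linarith

lemma Astep_ineq {n k d : ℕ} (X : Matrix (Fin d) (Fin n) ℝ)
    (W M C : Matrix (Fin n) (Fin n) ℝ) (lam lamZ lamM a1 a2 : ℝ)
    (A A' Z : Matrix (Fin n) (Fin n) ℝ) (H : Matrix (Fin k) (Fin n) ℝ)
    (hmin : ∀ B : Matrix (Fin n) (Fin n) ℝ,
      fObj X W M C lam lamZ lamM a1 a2 A' Z H ≤ fObj X W M C lam lamZ lamM a1 a2 B Z H) :
    lam / 4 * frob (A' - A) ^ 2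
      ≤ fObj X W M C lam lamZ lamM a1 a2 A Z H - fObj X W M C lam lamZ lamM a1 a2 A' Z H := by
  have e1 : X - X * ((1/2 : ℝ) • (A + A')) = (1/2 : ℝ) • ((X - X * A) + (X - X * A')) := by
    rw [Matrix.mul_smul, Matrix.mul_add]
    ext i j
    simp only [Matrix.sub_apply, Matrix.smul_apply, Matrix.add_apply, smul_eq_mul]
    ring
  have e2 : (1/2 : ℝ) • (A + A') - Z = (1/2 : ℝ) • ((A - Z) + (A' - Z)) := by
    ext i j
    simp only [Matrix.sub_apply, Matrix.smul_apply, Matrix.add_apply, smul_eq_mul]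
    ring
  have h1 : frob (X - X * ((1/2 : ℝ) • (A + A'))) ^ 2
      = frob (X - X * A) ^ 2 / 2 + frob (X - X * A') ^ 2 / 2
        - frob ((X - X * A) - (X - X * A')) ^ 2 / 4 := by rw [e1, para]
  have h2 : frob ((1/2 : ℝ) • (A + A') - Z) ^ 2
      = frob (A - Z) ^ 2 / 2 + frob (A' - Z) ^ 2 / 2 - frob (A - A') ^ 2 / 4 := by
    rw [e2, para, sub_sub_sub_cancel_right]
  have hfs : frob (A' - A) ^ 2 = frob (A - A') ^ 2 := by rw [frob_sub_comm]
  have hm := hmin ((1/2 : ℝ) • (A + A'))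
  unfold fObj at hm ⊢
  rw [h1, h2] at hm
  have hnn : 0 ≤ frob ((X - X * A) - (X - X * A')) ^ 2 := sq_nonneg _
  rw [hfs]
  linarith

lemma Zstep_ineq {n k d : ℕ} (X : Matrix (Fin d) (Fin n) ℝ)
    (W M C : Matrix (Fin n) (Fin n) ℝ) (lam lamZ lamM a1 a2 : ℝ)
    (hlamZ : 0 ≤ lamZ) (ha1 : 0 ≤ a1)
    (A Z Z' : Matrix (Fin n) (Fin n) ℝ) (H : Matrix (Fin k) (Fin n) ℝ)
    (hc : 0 < trace (H * lap C * Hᵀ))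
    (hZd : ∀ i, Z i i = 0) (hZ'd : ∀ i, Z' i i = 0)
    (hmin : ∀ Y : Matrix (Fin n) (Fin n) ℝ, (∀ i, Y i i = 0) →
      fObj X W M C lam lamZ lamM a1 a2 A Z' H ≤ fObj X W M C lam lamZ lamM a1 a2 A Y H) :
    lam / 4 * frob (Z' - Z) ^ 2
      ≤ fObj X W M C lam lamZ lamM a1 a2 A Z H - fObj X W M C lam lamZ lamM a1 a2 A Z' H := by
  have hbar : ∀ i, ((1/2 : ℝ) • (Z + Z')) i i = 0 := by
    intro i
    simp [Matrix.smul_apply, Matrix.add_apply, hZd i, hZ'd i]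
  have e2 : A - (1/2 : ℝ) • (Z + Z') = (1/2 : ℝ) • ((A - Z) + (A - Z')) := by
    ext i j
    simp only [Matrix.sub_apply, Matrix.smul_apply, Matrix.add_apply, smul_eq_mul]
    ring
  have h2 : frob (A - (1/2 : ℝ) • (Z + Z')) ^ 2
      = frob (A - Z) ^ 2 / 2 + frob (A - Z') ^ 2 / 2 - frob (Z' - Z) ^ 2 / 4 := by
    rw [e2, para, sub_sub_sub_cancel_left]
  have h3 := l1_mid Z Z'
  have h3' : lamZ * (∑ i, ∑ j, |((1/2 : ℝ) • (Z + Z')) i j|)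
      ≤ lamZ * (((∑ i, ∑ j, |Z i j|) + ∑ i, ∑ j, |Z' i j|) / 2) :=
    mul_le_mul_of_nonneg_left h3 hlamZ
  have h4 := trace_lap_mid H Z Z'
  have h4' : a1 * trace (H * lap ((1/2 : ℝ) • (Z + Z')) * Hᵀ) / trace (H * lap C * Hᵀ)
      ≤ a1 * ((trace (H * lap Z * Hᵀ) + trace (H * lap Z' * Hᵀ)) / 2)
          / trace (H * lap C * Hᵀ) :=
    div_le_div_of_nonneg_right (mul_le_mul_of_nonneg_left h4 ha1) hc.le
  have hm := hmin ((1/2 : ℝ) • (Z + Z')) hbar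
  unfold fObj at hm ⊢
  rw [h2] at hm
  have hexp : a1 * ((trace (H * lap Z * Hᵀ) + trace (H * lap Z' * Hᵀ)) / 2)
          / trace (H * lap C * Hᵀ)
      = (a1 * trace (H * lap Z * Hᵀ) / trace (H * lap C * Hᵀ)
        + a1 * trace (H * lap Z' * Hᵀ) / trace (H * lap C * Hᵀ)) / 2 := by ring
  rw [hexp] at h4'
  linarith
theorem dgsl_successive_differences_tendsto_zero (n k d : ℕ) (hn : 0 < n) (hk : 0 < k) (hd : 0 < d)
    (X : Matrix (Fin d) (Fin n) ℝ) (W M C : Matrix (Fin n) (Fin n) ℝ)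
    (lam lamZ lamM a1 a2 : ℝ) (hlam : 0 < lam) (hlamZ : 0 < lamZ)
    (hlamM : 0 < lamM) (ha1 : 0 < a1) (ha2 : 0 < a2)
    (hC : ∀ H : Matrix (Fin k) (Fin n) ℝ, H * Hᵀ = 1 → 0 < trace (H * lap C * Hᵀ))
    (Aseq Zseq : ℕ → Matrix (Fin n) (Fin n) ℝ)
    (Hseq : ℕ → Matrix (Fin k) (Fin n) ℝ)
    (hZ0 : ∀ i, Zseq 0 i i = 0) (hH0 : Hseq 0 * (Hseq 0)ᵀ = 1)
    (hHstep : ∀ t : ℕ, Hseq (t + 1) * (Hseq (t + 1))ᵀ = 1 ∧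
      ∀ H : Matrix (Fin k) (Fin n) ℝ, H * Hᵀ = 1 →
        fObj X W M C lam lamZ lamM a1 a2 (Aseq t) (Zseq t) (Hseq (t + 1))
          ≤ fObj X W M C lam lamZ lamM a1 a2 (Aseq t) (Zseq t) H)
    (hAstep : ∀ (t : ℕ) (A : Matrix (Fin n) (Fin n) ℝ),
      fObj X W M C lam lamZ lamM a1 a2 (Aseq (t + 1)) (Zseq t) (Hseq (t + 1))
        ≤ fObj X W M C lam lamZ lamM a1 a2 A (Zseq t) (Hseq (t + 1)))
    (hZstep : ∀ t : ℕ, (∀ i, Zseq (t + 1) i i = 0) ∧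
      ∀ Z : Matrix (Fin n) (Fin n) ℝ, (∀ i, Z i i = 0) →
        fObj X W M C lam lamZ lamM a1 a2 (Aseq (t + 1)) (Zseq (t + 1)) (Hseq (t + 1))
          ≤ fObj X W M C lam lamZ lamM a1 a2 (Aseq (t + 1)) Z (Hseq (t + 1))) :
    Tendsto (fun t : ℕ => frob (Aseq (t + 1) - Aseq t)) atTop (𝓝 0) ∧
    Tendsto (fun t : ℕ => frob (Zseq (t + 1) - Zseq t)) atTop (𝓝 0) := by
  set g : ℕ → ℝ := fun t => fObj X W M C lam lamZ lamM a1 a2 (Aseq t) (Zseq t) (Hseq (t + 1))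
    with hg
  set a : ℕ → ℝ := fun t => frob (Aseq (t + 1) - Aseq t) ^ 2 with ha
  set b : ℕ → ℝ := fun t => frob (Zseq (t + 1) - Zseq t) ^ 2 with hb
  have hOrth : ∀ t, Hseq (t + 1) * (Hseq (t + 1))ᵀ = 1 := fun t => (hHstep t).1
  have hcpos : ∀ t, 0 < trace (Hseq (t + 1) * lap C * (Hseq (t + 1))ᵀ) :=
    fun t => hC _ (hOrth t)
  have hZdiag : ∀ t, ∀ i, Zseq t i i = 0 := by
    intro t
    cases t with
    | zero => exact hZ0
    | succ s => exact (hZstep s).1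
  -- sufficient decrease
  have hdec : ∀ t, lam / 4 * (a t + b t) ≤ g t - g (t + 1) := by
    intro t
    have s1 : lam / 4 * a t
        ≤ g t - fObj X W M C lam lamZ lamM a1 a2 (Aseq (t + 1)) (Zseq t) (Hseq (t + 1)) :=
      Astep_ineq X W M C lam lamZ lamM a1 a2 (Aseq t) (Aseq (t + 1)) (Zseq t)
        (Hseq (t + 1)) (fun B => hAstep t B)
    have s2 : lam / 4 * b t
        ≤ fObj X W M C lam lamZ lamM a1 a2 (Aseq (t + 1)) (Zseq t) (Hseq (t + 1))
          - fObj X W M C lam lamZ lamM a1 a2 (Aseq (t + 1)) (Zseq (t + 1)) (Hseq (t + 1)) :=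
      Zstep_ineq X W M C lam lamZ lamM a1 a2 hlamZ.le ha1.le (Aseq (t + 1)) (Zseq t)
        (Zseq (t + 1)) (Hseq (t + 1)) (hcpos t) (hZdiag t) (hZdiag (t + 1))
        (fun Y hY => (hZstep t).2 Y hY)
    have s3 : g (t + 1)
        ≤ fObj X W M C lam lamZ lamM a1 a2 (Aseq (t + 1)) (Zseq (t + 1)) (Hseq (t + 1)) :=
      (hHstep (t + 1)).2 (Hseq (t + 1)) (hOrth t)
    have : lam / 4 * (a t + b t) = lam / 4 * a t + lam / 4 * b t := by ring
    linarith
  have hgnn : ∀ t, 0 ≤ g t := fun t =>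
    fObj_nonneg X W M C lam lamZ lamM a1 a2 hlam.le hlamZ.le hlamM.le ha1.le ha2.le
      (Aseq t) (Zseq t) (Hseq (t + 1)) (hcpos t)
  have hnn : ∀ t, 0 ≤ lam / 4 * (a t + b t) := by
    intro t
    have : 0 ≤ a t := sq_nonneg _
    have : 0 ≤ b t := sq_nonneg _
    positivity
  have hsumle : ∀ T : ℕ, ∑ t ∈ Finset.range T, lam / 4 * (a t + b t) ≤ g 0 := by
    intro T
    calc ∑ t ∈ Finset.range T, lam / 4 * (a t + b t)
        ≤ ∑ t ∈ Finset.range T, (g t - g (t + 1)) :=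
          Finset.sum_le_sum fun t _ => hdec t
      _ = g 0 - g T := Finset.sum_range_sub' g T
      _ ≤ g 0 := by linarith [hgnn T]
  have hsummable : Summable (fun t => lam / 4 * (a t + b t)) :=
    summable_of_sum_range_le hnn hsumle
  have hten : Tendsto (fun t => lam / 4 * (a t + b t)) atTop (𝓝 0) :=
    hsummable.tendsto_atTop_zero
  have hscaled : Tendsto (fun t => (4 / lam) * (lam / 4 * (a t + b t))) atTop (𝓝 0) := by
    have := hten.const_mul (4 / lam)
    simpa using this
  have habsum : ∀ t, (4 / lam) * (lam / 4 * (a t + b t)) = a t + b t := by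
    intro t; field_simp
  have htab : Tendsto (fun t => a t + b t) atTop (𝓝 0) := by
    simpa [habsum] using hscaled
  have haten : Tendsto a atTop (𝓝 0) := by
    refine squeeze_zero (fun t => sq_nonneg _) (fun t => ?_) htab
    have := sq_nonneg (frob (Zseq (t + 1) - Zseq t))
    simp only [ha, hb]
    linarith
  have hbten : Tendsto b atTop (𝓝 0) := by
    refine squeeze_zero (fun t => sq_nonneg _) (fun t => ?_) htab
    have := sq_nonneg (frob (Aseq (t + 1) - Aseq t))
    simp only [ha, hb]
    linarith
  constructor
  · have e : (fun t : ℕ => frob (Aseq (t + 1) - Aseq t)) = fun t => Real.sqrt (a t) :=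
      funext fun t => (Real.sqrt_sq (frob_nonneg _)).symm
    rw [e]
    have : Tendsto Real.sqrt (𝓝 0) (𝓝 0) :=
      Real.continuous_sqrt.tendsto' 0 0 Real.sqrt_zero
    exact this.comp haten
  · have e : (fun t : ℕ => frob (Zseq (t + 1) - Zseq t)) = fun t => Real.sqrt (b t) :=
      funext fun t => (Real.sqrt_sq (frob_nonneg _)).symm
    rw [e]
    have : Tendsto Real.sqrt (𝓝 0) (𝓝 0) :=
      Real.continuous_sqrt.tendsto' 0 0 Real.sqrt_zero
    exact this.comp hbten
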